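/- Let L be a first-order language with no relation symbols and no 0-ary function symbols, and M a naturally preordered idempotent L-structure with algebraic predecessor preorder ≤_M. Then: (i) the relation ≡_M defined by i ≡_M j ↔ (i ≤_M j and j ≤_M i) is a congruence on M; and (ii) for every n ≥ 1, every n-ary function symbol σ and every tuple (i_0,…,i_{n-1}), the element funMap σ (i_0,…,i_{n-1}) is a least upper bound of the i_k with respect to ≤_M: each i_k ≤_M funMap σ (i_0,…,i_{n-1}), and for every j ∈ M with i_k ≤_M j for all k one has funMap σ (i_0,…,i_{n-1}) ≤_M j. -/
import Mathlib


open FirstOrder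

/-- `b` is an algebraic predecessor of `a` in one step: `a` is the value of some
`n`-ary operation (`n ≥ 1`) at a tuple having `b` among its components. -/
def AlgPred {L : FirstOrder.Language} {M : Type*} (S : L.Structure M) (b a : M) : Prop :=
  ∃ n : ℕ, 0 < n ∧ ∃ (σ : L.Functions n) (t : Fin n → M) (k : Fin n),
    S.funMap σ t = a ∧ t k = b

/-- The algebraic predecessor preorder: the reflexive–transitive closure of `AlgPred`. -/
def AlgPredLE {L : FirstOrder.Language} {M : Type*} (S : L.Structure M) : M → M → Prop :=
  Relation.ReflTransGen (AlgPred S)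

/-- A map is an `L`-homomorphism if it preserves every operation. -/
def IsAlgHom {L : FirstOrder.Language} {M N : Type*} (S : L.Structure M) (T : L.Structure N)
    (f : M → N) : Prop :=
  ∀ (n : ℕ) (σ : L.Functions n) (t : Fin n → M), f (S.funMap σ t) = T.funMap σ (fun k => f (t k))

/-- An L-structure is idempotent if every operation of arity `n ≥ 1` applied to a
constant tuple returns its value. -/
def IsIdemStruct {L : FirstOrder.Language} {M : Type*} (S : L.Structure M) : Prop :=
  ∀ (n : ℕ), 0 < n → ∀ (σ : L.Functions n) (a : M), S.funMap σ (fun _ => a) = a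

/-- An L-structure is naturally preordered if every operation of arity `n ≥ 1` is
isotone with respect to the algebraic predecessor preorder. -/
def IsNatPreordered {L : FirstOrder.Language} {M : Type*} (S : L.Structure M) : Prop :=
  ∀ (n : ℕ), 0 < n → ∀ (σ : L.Functions n) (j i : Fin n → M),
    (∀ k, AlgPredLE S (j k) (i k)) → AlgPredLE S (S.funMap σ j) (S.funMap σ i)

/-- A subset is closed if it is closed under every operation of arity `n ≥ 1`. -/
def IsClosedSubset {L : FirstOrder.Language} {M : Type*} (S : L.Structure M) (X : Set M) : Prop :=
  ∀ (n : ℕ), 0 < n → ∀ (σ : L.Functions n) (t : Fin n → M), (∀ k, t k ∈ X) → S.funMap σ t ∈ X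

/-- A congruence on an L-structure: an equivalence relation compatible with every
operation of arity `n ≥ 1`. -/
def IsCongruence {L : FirstOrder.Language} {M : Type*} (S : L.Structure M)
    (Φ : M → M → Prop) : Prop :=
  Equivalence Φ ∧ ∀ (n : ℕ), 0 < n → ∀ (σ : L.Functions n) (x y : Fin n → M),
    (∀ k, Φ (x k) (y k)) → Φ (S.funMap σ x) (S.funMap σ y)

theorem stmt7 (L : FirstOrder.Language) (hrel : ∀ n, IsEmpty (L.Relations n))
    (h0 : IsEmpty (L.Functions 0)) {M : Type*} (S : L.Structure M)
    (hidem : IsIdemStruct S) (hnat : IsNatPreordered S) :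
    IsCongruence S (fun i j => AlgPredLE S i j ∧ AlgPredLE S j i) ∧
      ∀ (n : ℕ), 0 < n → ∀ (σ : L.Functions n) (t : Fin n → M),
        (∀ k, AlgPredLE S (t k) (S.funMap σ t)) ∧
          ∀ j : M, (∀ k, AlgPredLE S (t k) j) → AlgPredLE S (S.funMap σ t) j := by
  constructor
  · refine ⟨⟨fun x => ⟨.refl, .refl⟩, fun h => ⟨h.2, h.1⟩,
      fun h1 h2 => ⟨h1.1.trans h2.1, h2.2.trans h1.2⟩⟩, ?_⟩
    intro n hn σ x y h
    exact ⟨hnat n hn σ x y fun k => (h k).1, hnat n hn σ y x fun k => (h k).2⟩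
  · intro n hn σ t
    constructor
    · intro k
      exact Relation.ReflTransGen.single ⟨n, hn, σ, t, k, rfl, rfl⟩
    · intro j hj
      have := hnat n hn σ t (fun _ => j) hj
      rwa [hidem n hn σ j] at this
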